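/- arXiv:2503.15735 — 2 statements merged into one kernel-verified Lean document; each statement's English description precedes it below -/
import Mathlib

section
/- For every real number a > -1 and nonnegative integer m, the integral ∫_0^∞ dx/(x^4 + 2a x^2 + 1)^{m+1} equals π / (2^{m+3/2} (a+1)^{m+1/2}) · P_m(a), where P_m(a) = P_m^{(m+1/2, -m-1/2)}(a) is the Jacobi polynomial with parameters α = m+1/2, β = -m-1/2 evaluated at a. -/
open Finset Real MeasureTheory

/-- Generalized binomial coefficient `binom(u, j) = u(u-1)⋯(u-j+1)/j!`. -/
noncomputable def gbinom (u : ℝ) (j : ℕ) : ℝ :=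
  (∏ i ∈ Finset.range j, (u - i)) / (Nat.factorial j)

/-- Jacobi polynomial via the explicit sum formula. -/
noncomputable def jacobiP (n : ℕ) (α β : ℝ) (x : ℝ) : ℝ :=
  ((2:ℝ)^n)⁻¹ * ∑ k ∈ Finset.range (n+1),
    gbinom ((n:ℝ) + α) (n - k) * gbinom ((n:ℝ) + β) k * (x - 1)^k * (x + 1)^(n - k)


lemma gbinom_zero (u : ℝ) : gbinom u 0 = 1 := by simp [gbinom]

lemma gbinom_succ (u : ℝ) (k : ℕ) :
    gbinom u (k+1) = gbinom u k * (u - k) / (k+1) := by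
  rw [gbinom, gbinom, Finset.prod_range_succ, Nat.factorial_succ]
  rw [div_mul_eq_mul_div, div_div]
  congr 1
  push_cast
  ring

lemma gbinom_absorb (u : ℝ) (k : ℕ) :
    ((k:ℝ)+1) * gbinom u (k+1) = u * gbinom (u-1) k := by
  rw [gbinom, gbinom, Finset.prod_range_succ', Nat.factorial_succ]
  have : ∀ i ∈ Finset.range k, u - (↑(i+1)) = (u-1) - i := by intro i _; push_cast; ring
  rw [Finset.prod_congr rfl this]
  push_cast
  field_simp
  ring

lemma gbinom_vandermonde : ∀ (n : ℕ) (u v : ℝ),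
    ∑ l ∈ Finset.range (n+1), gbinom u l * gbinom v (n-l) = gbinom (u+v) n
  | 0, u, v => by simp [gbinom]
  | (n+1), u, v => by
    have hn1 : ((n:ℝ)+1) ≠ 0 := by positivity
    have key : ((n:ℝ)+1) * ∑ l ∈ Finset.range (n+2), gbinom u l * gbinom v (n+1-l)
        = ((n:ℝ)+1) * gbinom (u+v) (n+1) := by
      rw [Finset.mul_sum]
      have split : ∀ l ∈ Finset.range (n+2),
          ((n:ℝ)+1) * (gbinom u l * gbinom v (n+1-l)) =
            ((l:ℝ) * gbinom u l) * gbinom v (n+1-l)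
            + gbinom u l * ((((n+1-l : ℕ)):ℝ) * gbinom v (n+1-l)) := by
        intro l hl
        simp only [Finset.mem_range] at hl
        have hl' : l ≤ n+1 := by omega
        have : (((n+1-l : ℕ)):ℝ) = (n:ℝ)+1-l := by
          push_cast [Nat.cast_sub hl']; ring
        rw [this]; ring
      rw [Finset.sum_congr rfl split, Finset.sum_add_distrib]
      have s1 : ∑ l ∈ Finset.range (n+2), ((l:ℝ) * gbinom u l) * gbinom v (n+1-l)
          = u * gbinom (u-1+v) n := by
        rw [Finset.sum_range_succ']
        simp only [Nat.cast_zero, zero_mul, zero_mul, add_zero]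
        have : ∀ l ∈ Finset.range (n+1),
            (((l:ℕ)+1:ℕ):ℝ) * gbinom u (l+1) * gbinom v (n+1-(l+1)) =
            u * (gbinom (u-1) l * gbinom v (n-l)) := by
          intro l hl
          have : (((l:ℕ)+1:ℕ):ℝ) * gbinom u (l+1) = u * gbinom (u-1) l := by
            push_cast; exact gbinom_absorb u l
          rw [this]
          have : n+1-(l+1) = n-l := by omega
          rw [this]; ring
        rw [Finset.sum_congr rfl this, ← Finset.mul_sum, gbinom_vandermonde n (u-1) v]
      have s2 : ∑ l ∈ Finset.range (n+2), gbinom u l * ((((n+1-l : ℕ)):ℝ) * gbinom v (n+1-l))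
          = v * gbinom (u+(v-1)) n := by
        rw [Finset.sum_range_succ]
        simp only [Nat.sub_self, Nat.cast_zero, zero_mul, mul_zero, add_zero]
        have : ∀ l ∈ Finset.range (n+1),
            gbinom u l * ((((n+1-l : ℕ)):ℝ) * gbinom v (n+1-l)) =
            v * (gbinom u l * gbinom (v-1) (n-l)) := by
          intro l hl
          simp only [Finset.mem_range] at hl
          have h1 : n+1-l = (n-l)+1 := by omega
          rw [h1]
          have : ((((n-l:ℕ)+1:ℕ)):ℝ) * gbinom v ((n-l)+1) = v * gbinom (v-1) (n-l) := by
            push_cast; exact gbinom_absorb v (n-l)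
          rw [this]; ring
        rw [Finset.sum_congr rfl this, ← Finset.mul_sum, gbinom_vandermonde n u (v-1)]
      rw [s1, s2]
      have : ((n:ℝ)+1) * gbinom (u+v) (n+1) = (u+v) * gbinom (u+v-1) n := by
        have := gbinom_absorb (u+v) n
        push_cast at this ⊢
        linarith [this]
      rw [this]
      have e1 : u-1+v = u+v-1 := by ring
      have e2 : u+(v-1) = u+v-1 := by ring
      rw [e1, e2]; ring
    exact mul_left_cancel₀ hn1 key

lemma gbinom_mul_choose (u : ℝ) {m r : ℕ} (h : r ≤ m) :
    gbinom u m * (Nat.choose m r : ℝ) = gbinom u r * gbinom (u - r) (m - r) := by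
  rw [gbinom, gbinom, gbinom]
  have hm : m = r + (m - r) := by omega
  have hsplit : ∏ i ∈ Finset.range m, (u - i)
      = (∏ i ∈ Finset.range r, (u - i)) * ∏ i ∈ Finset.range (m-r), (u - r - i) := by
    calc ∏ i ∈ Finset.range m, (u - i)
        = ∏ i ∈ Finset.range (r + (m-r)), (u - i) := by rw [← hm]
      _ = (∏ i ∈ Finset.range r, (u - i)) * ∏ i ∈ Finset.range (m-r), (u - ((r:ℕ)+i : ℕ)) :=
          Finset.prod_range_add _ _ _
      _ = _ := by
          congr 1
          apply Finset.prod_congr rfl; intro i _; push_cast; ring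
  rw [hsplit]
  have hch : (Nat.choose m r : ℝ) = (m.factorial : ℝ) / (r.factorial * (m-r).factorial) :=
    Nat.cast_choose ℝ h
  rw [hch]
  have h1 : (m.factorial : ℝ) ≠ 0 := by positivity
  have h2 : (r.factorial : ℝ) ≠ 0 := by positivity
  have h3 : ((m-r).factorial : ℝ) ≠ 0 := by positivity
  field_simp
  try ring

lemma gbinom_natCast : ∀ {n k : ℕ}, k ≤ n → gbinom (n:ℝ) k = (Nat.choose n k : ℝ)
  | n, 0, _ => by simp [gbinom]
  | n, (k+1), h => by
    have hk : k ≤ n := by omega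
    rw [gbinom_succ, gbinom_natCast hk]
    have h2 := Nat.choose_succ_right_eq n k
    have keyc : (Nat.choose n (k+1) : ℝ) * ((k:ℝ)+1) = (Nat.choose n k : ℝ) * ((n:ℝ) - (k:ℝ)) := by
      have := congrArg (fun t : ℕ => (t:ℝ)) h2
      push_cast [Nat.cast_sub hk] at this
      linarith [this]
    have hk1 : ((k:ℝ)+1) ≠ 0 := by positivity
    field_simp
    linarith [keyc]

lemma gbinom_neg_half : ∀ (i : ℕ), gbinom (-1/2 : ℝ) i = (-1)^i * (Nat.choose (2*i) i : ℝ) / 4^i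
  | 0 => by simp [gbinom]
  | (i+1) => by
    rw [gbinom_succ, gbinom_neg_half i]
    have hnat := Nat.succ_mul_centralBinom_succ i
    have key : ((i:ℝ)+1) * (Nat.choose (2*(i+1)) (i+1) : ℝ)
        = 2*(2*(i:ℝ)+1) * (Nat.choose (2*i) i : ℝ) := by
      have : (i+1) * Nat.choose (2*(i+1)) (i+1) = 2*(2*i+1) * Nat.choose (2*i) i := hnat
      exact_mod_cast this
    have hgoal2 : (Nat.choose (2*i) i : ℝ) * (-1/2 - (i:ℝ)) / 4^i / ((i:ℝ)+1)
        = -(Nat.choose (2*(i+1)) (i+1):ℝ)/4^(i+1) := by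
      rw [div_div, div_eq_div_iff (by positivity) (by positivity)]
      linear_combination (4:ℝ)^i * key
    calc ((-1:ℝ))^i * (Nat.choose (2*i) i : ℝ) / 4^i * (-1/2 - (i:ℝ)) / ((i:ℝ)+1)
        = ((-1:ℝ))^i * ((Nat.choose (2*i) i : ℝ) * (-1/2 - (i:ℝ)) / 4^i / ((i:ℝ)+1)) := by
          ring
      _ = ((-1:ℝ))^i * (-(Nat.choose (2*(i+1)) (i+1):ℝ)/4^(i+1)) := by rw [hgoal2]
      _ = (-1)^(i+1) * (Nat.choose (2*(i+1)) (i+1) : ℝ) / 4^(i+1) := by ring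

noncomputable def chebG (m : ℕ) (s : ℝ) : ℝ :=
  ∑ k ∈ Finset.range (m+1), (Nat.choose (m+k) (2*k) : ℝ) * s^k

noncomputable def chebH (m : ℕ) (s : ℝ) : ℝ :=
  ∑ k ∈ Finset.range (m+1), (Nat.choose (m+1+k) (2*k+1) : ℝ) * s^k

lemma chebG_succ (m : ℕ) (s : ℝ) : chebG (m+1) s = chebG m s + s * chebH m s := by
  rw [chebG, chebG, chebH, Finset.sum_range_succ']
  have e0 : (Nat.choose (m+1+0) (2*0) : ℝ) * s^0 = 1 := by norm_num
  rw [e0]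
  have step : ∀ k ∈ Finset.range (m+1),
      (Nat.choose (m+1+(k+1)) (2*(k+1)) : ℝ) * s^(k+1)
      = (Nat.choose (m+(k+1)) (2*(k+1)) : ℝ) * s^(k+1)
        + (Nat.choose (m+1+k) (2*k+1) : ℝ) * s^(k+1) := by
    intro k _
    have h : Nat.choose (m+1+(k+1)) (2*(k+1)) =
        Nat.choose (m+(k+1)) (2*(k+1)) + Nat.choose (m+1+k) (2*k+1) := by
      have := Nat.succ_sub_one
      have hp : Nat.choose (m+k+2) (2*k+2) = Nat.choose (m+k+1) (2*k+1) + Nat.choose (m+k+1) (2*k+2) :=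
        Nat.choose_succ_succ' (m+k+1) (2*k+1)
      have e1 : m+1+(k+1) = m+k+2 := by omega
      have e2 : 2*(k+1) = 2*k+2 := by omega
      have e3 : m+(k+1) = m+k+1 := by omega
      have e4 : m+1+k = m+k+1 := by omega
      rw [e1, e2, e3, e4]
      omega
    rw [h]; push_cast; ring
  rw [Finset.sum_congr rfl step, Finset.sum_add_distrib]
  -- goal: Σ (choose (m+(k+1)) (2(k+1))) s^(k+1) + Σ choose(m+1+k)(2k+1) s^(k+1) + 1
  --     = Σ_{k<m+1} choose (m+k) (2k) s^k + s * Σ ...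
  have left : ∑ k ∈ Finset.range (m+1), (Nat.choose (m+(k+1)) (2*(k+1)) : ℝ) * s^(k+1) + 1
      = ∑ k ∈ Finset.range (m+1), (Nat.choose (m+k) (2*k) : ℝ) * s^k := by
    rw [Finset.sum_range_succ]
    have etop : (Nat.choose (m+(m+1)) (2*(m+1)) : ℝ) * s^(m+1) = 0 := by
      have : Nat.choose (m+(m+1)) (2*(m+1)) = 0 := Nat.choose_eq_zero_of_lt (by omega)
      rw [this]; norm_num
    rw [etop, add_zero]
    rw [show (∑ k ∈ Finset.range (m+1), (Nat.choose (m+k) (2*k) : ℝ) * s^k)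
      = ∑ k ∈ Finset.range m, (Nat.choose (m+(k+1)) (2*(k+1)) : ℝ) * s^(k+1) + (Nat.choose (m+0) (2*0) : ℝ) * s^0
      from Finset.sum_range_succ' _ m]
    norm_num
  have right : ∑ k ∈ Finset.range (m+1), (Nat.choose (m+1+k) (2*k+1) : ℝ) * s^(k+1)
      = s * ∑ k ∈ Finset.range (m+1), (Nat.choose (m+1+k) (2*k+1) : ℝ) * s^k := by
    rw [Finset.mul_sum]
    apply Finset.sum_congr rfl; intro k _; ring
  linarith [left, right]

lemma chebH_succ (m : ℕ) (s : ℝ) : chebH (m+1) s = chebG (m+1) s + chebH m s := by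
  rw [chebH, chebG, chebH]
  have step : ∀ k ∈ Finset.range (m+2),
      (Nat.choose (m+2+k) (2*k+1) : ℝ) * s^k
      = (Nat.choose (m+1+k) (2*k) : ℝ) * s^k + (Nat.choose (m+1+k) (2*k+1) : ℝ) * s^k := by
    intro k _
    have h : Nat.choose (m+2+k) (2*k+1) = Nat.choose (m+1+k) (2*k) + Nat.choose (m+1+k) (2*k+1) := by
      have hp : Nat.choose (m+1+k+1) (2*k+1) = Nat.choose (m+1+k) (2*k) + Nat.choose (m+1+k) (2*k+1) :=
        Nat.choose_succ_succ' (m+1+k) (2*k)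
      have e1 : m+2+k = m+1+k+1 := by omega
      rw [e1]; omega
    rw [h]; push_cast; ring
  rw [Finset.sum_congr rfl step, Finset.sum_add_distrib]
  congr 1
  rw [Finset.sum_range_succ]
  have etop : (Nat.choose (m+1+(m+1)) (2*(m+1)+1) : ℝ) * s^(m+1) = 0 := by
    have : Nat.choose (m+1+(m+1)) (2*(m+1)+1) = 0 := Nat.choose_eq_zero_of_lt (by omega)
    rw [this]; norm_num
  rw [etop, add_zero]

lemma aux_xy (x y : ℝ) (hxy : x * y = 1) (n : ℕ) : x * y^(n+1) = y^n := by
  rw [pow_succ]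
  calc x * (y^n * y) = (x*y) * y^n := by ring
    _ = y^n := by rw [hxy]; ring

lemma cheb_key (m : ℕ) {x : ℝ} (hx : x ≠ 0) :
    x^(2*m+1) + (x⁻¹)^(2*m+1) = (x + x⁻¹) * chebG m ((x - x⁻¹)^2)
    ∧ x^(2*m+2) - (x⁻¹)^(2*m+2) = (x - x⁻¹) * (x + x⁻¹) * chebH m ((x - x⁻¹)^2) := by
  set y := x⁻¹ with hy
  have hxy : x * y = 1 := mul_inv_cancel₀ hx
  have hyx : y * x = 1 := by rw [mul_comm]; exact hxy
  induction m with
  | zero =>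
    constructor
    · show x^(2*0+1) + y^(2*0+1) = (x + y) * chebG 0 ((x-y)^2)
      rw [chebG]
      norm_num
    · show x^(2*0+2) - y^(2*0+2) = (x - y) * (x + y) * chebH 0 ((x-y)^2)
      rw [chebH]
      norm_num
      ring
  | succ m ih =>
    obtain ⟨hG, hH⟩ := ih
    have E1 : x^(2*m+3) + y^(2*m+3)
        = (x^(2*m+1) + y^(2*m+1)) + (x - y) * (x^(2*m+2) - y^(2*m+2)) := by
      have h1 : x * y^(2*m+1+1) = y^(2*m+1) := aux_xy x y hxy (2*m+1)
      have h2 : y * x^(2*m+1+1) = x^(2*m+1) := aux_xy y x hyx (2*m+1)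
      linear_combination h1 + h2
    have E2 : x^(2*m+4) - y^(2*m+4)
        = (x - y) * (x^(2*m+3) + y^(2*m+3)) + (x^(2*m+2) - y^(2*m+2)) := by
      have h1 : x * y^(2*m+2+1) = y^(2*m+2) := aux_xy x y hxy (2*m+2)
      have h2 : y * x^(2*m+2+1) = x^(2*m+2) := aux_xy y x hyx (2*m+2)
      linear_combination -h1 + h2
    have hGnew : x^(2*(m+1)+1) + y^(2*(m+1)+1) = (x + y) * chebG (m+1) ((x-y)^2) := by
      have e : 2*(m+1)+1 = 2*m+3 := by omega
      rw [e, E1, hG, hH, chebG_succ]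
      have e2 : 2*m+2 = 2*m+2 := rfl
      ring
    refine ⟨hGnew, ?_⟩
    have e : 2*(m+1)+2 = 2*m+4 := by omega
    rw [e, E2, chebH_succ]
    have e3 : 2*m+3 = 2*(m+1)+1 := by omega
    rw [e3, hGnew, hH]
    ring

lemma inner_eval (m i : ℕ) (him : i ≤ m) (a : ℝ) :
    ∑ k ∈ Finset.range (m+1),
      gbinom (2*(m:ℝ)+1/2) (m-k) * gbinom (-1/2) k * (Nat.choose k i : ℝ)
        * (-2)^i * (a+1)^(k-i) * (a+1)^(m-k)
    = gbinom (-1/2) i * (-2)^i * (a+1)^(m-i) * (Nat.choose (2*m-i) (m-i) : ℝ) := by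
  have h1 : ∑ k ∈ Finset.Ico i (m+1),
        (gbinom (2*(m:ℝ)+1/2) (m-k) * gbinom (-1/2) k * (Nat.choose k i : ℝ)
          * (-2)^i * (a+1)^(k-i) * (a+1)^(m-k))
      = ∑ k ∈ Finset.range (m+1),
        (gbinom (2*(m:ℝ)+1/2) (m-k) * gbinom (-1/2) k * (Nat.choose k i : ℝ)
          * (-2)^i * (a+1)^(k-i) * (a+1)^(m-k)) := by
    apply Finset.sum_subset
    · rw [Finset.range_eq_Ico]; exact Finset.Ico_subset_Ico (by omega) le_rfl
    · intro k hk hnk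
      simp only [Finset.mem_range] at hk
      simp only [Finset.mem_Ico] at hnk
      have hki : k < i := by omega
      have hz : Nat.choose k i = 0 := Nat.choose_eq_zero_of_lt hki
      rw [hz]; push_cast; ring
  rw [← h1, Finset.sum_Ico_eq_sum_range]
  have e : m+1-i = (m-i)+1 := by omega
  rw [e]
  have hstep : ∀ l ∈ Finset.range ((m-i)+1),
      gbinom (2*(m:ℝ)+1/2) (m-(i+l)) * gbinom (-1/2) (i+l) * (Nat.choose (i+l) i : ℝ)
        * (-2)^i * (a+1)^((i+l)-i) * (a+1)^(m-(i+l))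
      = (gbinom (-1/2) i * (-2)^i * (a+1)^(m-i))
          * (gbinom (-1/2-(i:ℝ)) l * gbinom (2*(m:ℝ)+1/2) ((m-i)-l)) := by
    intro l hl
    simp only [Finset.mem_range] at hl
    have hgb : gbinom (-1/2 : ℝ) (i+l) * (Nat.choose (i+l) i : ℝ)
        = gbinom (-1/2 : ℝ) i * gbinom (-1/2-(i:ℝ)) l := by
      have h := gbinom_mul_choose (-1/2 : ℝ) (show i ≤ i+l by omega)
      rw [Nat.add_sub_cancel_left] at h
      exact h
    have e1 : (i+l)-i = l := by omega
    have e2 : m-(i+l) = (m-i)-l := by omega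
    have hp : (a+1)^l * (a+1)^((m-i)-l) = (a+1)^(m-i) := by
      rw [← pow_add]; congr 1; omega
    rw [e1, e2]
    calc gbinom (2*(m:ℝ)+1/2) ((m-i)-l) * gbinom (-1/2) (i+l) * (Nat.choose (i+l) i : ℝ)
          * (-2)^i * (a+1)^l * (a+1)^((m-i)-l)
        = (gbinom (-1/2 : ℝ) (i+l) * (Nat.choose (i+l) i : ℝ)) * (-2)^i
            * ((a+1)^l * (a+1)^((m-i)-l)) * gbinom (2*(m:ℝ)+1/2) ((m-i)-l) := by ring
      _ = (gbinom (-1/2 : ℝ) i * gbinom (-1/2-(i:ℝ)) l) * (-2)^i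
            * ((a+1)^(m-i)) * gbinom (2*(m:ℝ)+1/2) ((m-i)-l) := by rw [hgb, hp]
      _ = _ := by ring
  rw [Finset.sum_congr rfl hstep, ← Finset.mul_sum]
  rw [gbinom_vandermonde (m-i) (-1/2-(i:ℝ)) (2*(m:ℝ)+1/2)]
  have hc : (-1/2-(i:ℝ)) + (2*(m:ℝ)+1/2) = ((2*m-i : ℕ):ℝ) := by
    push_cast [Nat.cast_sub (show i ≤ 2*m by omega)]
    ring
  rw [hc, gbinom_natCast (show m-i ≤ 2*m-i by omega)]
  try ring

lemma jacobi_expand (m : ℕ) (a : ℝ) :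
    jacobiP m ((m:ℝ)+1/2) (-(m:ℝ)-1/2) a
    = ∑ j ∈ Finset.range (m+1),
        (Nat.choose (2*(m-j)) (m-j) : ℝ) * (Nat.choose (m+j) j : ℝ) * 2^j / 4^m * (a+1)^j := by
  rw [jacobiP]
  have hαβ : ∀ k ∈ Finset.range (m+1),
      gbinom ((m:ℝ) + ((m:ℝ)+1/2)) (m-k) * gbinom ((m:ℝ) + (-(m:ℝ)-1/2)) k * (a-1)^k * (a+1)^(m-k)
      = gbinom (2*(m:ℝ)+1/2) (m-k) * gbinom (-1/2) k * (a-1)^k * (a+1)^(m-k) := by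
    intro k _
    have h1 : (m:ℝ) + ((m:ℝ)+1/2) = 2*(m:ℝ)+1/2 := by ring
    have h2 : (m:ℝ) + (-(m:ℝ)-1/2) = -1/2 := by ring
    rw [h1, h2]
  rw [Finset.sum_congr rfl hαβ]
  have hterm : ∀ k ∈ Finset.range (m+1),
      gbinom (2*(m:ℝ)+1/2) (m-k) * gbinom (-1/2) k * (a-1)^k * (a+1)^(m-k)
      = ∑ i ∈ Finset.range (m+1),
          gbinom (2*(m:ℝ)+1/2) (m-k) * gbinom (-1/2) k * (Nat.choose k i : ℝ)
            * (-2)^i * (a+1)^(k-i) * (a+1)^(m-k) := by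
    intro k hk
    simp only [Finset.mem_range] at hk
    have hexp : (a-1)^k = ∑ i ∈ Finset.range (k+1),
        (-2:ℝ)^i * (a+1)^(k-i) * (Nat.choose k i : ℝ) := by
      have h : a - 1 = (-2) + (a+1) := by ring
      rw [h, add_pow]
    rw [hexp, Finset.mul_sum, Finset.sum_mul]
    have hsub : ∑ i ∈ Finset.range (k+1),
        (gbinom (2*(m:ℝ)+1/2) (m-k) * gbinom (-1/2) k * ((-2:ℝ)^i * (a+1)^(k-i) * (Nat.choose k i : ℝ))) * (a+1)^(m-k)
        = ∑ i ∈ Finset.range (m+1),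
        (gbinom (2*(m:ℝ)+1/2) (m-k) * gbinom (-1/2) k * ((-2:ℝ)^i * (a+1)^(k-i) * (Nat.choose k i : ℝ))) * (a+1)^(m-k) := by
      apply Finset.sum_subset
      · exact Finset.range_subset_range.mpr (by omega)
      · intro i hi hni
        simp only [Finset.mem_range] at hi hni
        have : Nat.choose k i = 0 := Nat.choose_eq_zero_of_lt (by omega)
        rw [this]; push_cast; ring
    rw [hsub]
    apply Finset.sum_congr rfl
    intro i _
    ring
  rw [Finset.sum_congr rfl hterm, Finset.sum_comm]
  have hin : ∀ i ∈ Finset.range (m+1),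
      ∑ k ∈ Finset.range (m+1),
        gbinom (2*(m:ℝ)+1/2) (m-k) * gbinom (-1/2) k * (Nat.choose k i : ℝ)
          * (-2)^i * (a+1)^(k-i) * (a+1)^(m-k)
      = (Nat.choose (2*i) i : ℝ) / 2^i * (a+1)^(m-i) * (Nat.choose (2*m-i) (m-i) : ℝ) := by
    intro i hi
    simp only [Finset.mem_range] at hi
    rw [inner_eval m i (by omega) a, gbinom_neg_half i]
    have key : ∀ C : ℝ, (-1:ℝ)^i * C / 4^i * (-2)^i = C / 2^i := by
      intro C
      have h24 : ((-1:ℝ))^i * (-2)^i * 2^i = 4^i := by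
        rw [← mul_pow, ← mul_pow]; norm_num
      have h2 : (2:ℝ)^i ≠ 0 := by positivity
      have h4 : (4:ℝ)^i ≠ 0 := by positivity
      field_simp
      linear_combination C * h24
    calc ((-1:ℝ)^i * (Nat.choose (2*i) i : ℝ) /4^i) * (-2)^i * (a+1)^(m-i) * (Nat.choose (2*m-i) (m-i) : ℝ)
        = ((-1:ℝ)^i * (Nat.choose (2*i) i : ℝ) /4^i * (-2)^i) * ((a+1)^(m-i) * (Nat.choose (2*m-i) (m-i) : ℝ)) := by
          ring
      _ = ((Nat.choose (2*i) i : ℝ)/2^i) * ((a+1)^(m-i) * (Nat.choose (2*m-i) (m-i) : ℝ)) := by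
          rw [key]
      _ = _ := by ring
  rw [Finset.sum_congr rfl hin]
  rw [← Finset.sum_range_reflect]
  rw [Finset.mul_sum]
  apply Finset.sum_congr rfl
  intro j hj
  simp only [Finset.mem_range] at hj
  have e1 : m - (m - j) = j := by omega
  have e2 : 2*m - (m-j) = m+j := by omega
  have e3 : m + 1 - 1 - j = m - j := by omega
  rw [e3, e1, e2]
  have h2m : (2:ℝ)^m = 2^(m-j) * 2^j := by rw [← pow_add]; congr 1; omega
  have h4m : (4:ℝ)^m = 2^m * 2^m := by rw [← mul_pow]; norm_num
  have hne : (2:ℝ)^(m-j) ≠ 0 := by positivity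
  field_simp [h4m, h2m]
  rw [h4m, h2m]; ring

lemma integrable_pow_div (c : ℝ) (hc : 0 < c) {j mm : ℕ} (hj : j ≤ mm) :
    Integrable (fun w : ℝ => (w^2)^j / (w^2+c)^(mm+1)) := by
  set K : ℝ := max 1 c⁻¹ with hK
  have hK1 : (1:ℝ) ≤ K := le_max_left _ _
  have hKc : c⁻¹ ≤ K := le_max_right _ _
  have hKc' : 1 ≤ K * c := by
    calc (1:ℝ) = c⁻¹ * c := (inv_mul_cancel₀ hc.ne').symm
      _ ≤ K * c := by nlinarith
  have hbound : ∀ w : ℝ, (1+w^2) ≤ K * (w^2+c) := by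
    intro w
    nlinarith [sq_nonneg w]
  apply Integrable.mono' ((integrable_inv_one_add_sq).const_mul (K^(mm+1)))
  · apply Continuous.aestronglyMeasurable
    apply Continuous.div (by continuity) (by continuity)
    intro w
    positivity
  · filter_upwards with w
    have hd : (0:ℝ) < (w^2+c)^(mm+1) := by positivity
    have h1w : (0:ℝ) < 1 + w^2 := by positivity
    rw [Real.norm_eq_abs, abs_of_nonneg (by positivity)]
    rw [div_le_iff₀ hd]
    have key : (w^2)^j * (1+w^2) ≤ K^(mm+1) * (w^2+c)^(mm+1) := by
      calc (w^2)^j * (1+w^2) ≤ (1+w^2)^j * (1+w^2) := by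
            apply mul_le_mul_of_nonneg_right _ (le_of_lt h1w)
            exact pow_le_pow_left₀ (sq_nonneg w) (by linarith) j
        _ = (1+w^2)^(j+1) := (pow_succ _ _).symm
        _ ≤ (1+w^2)^(mm+1) := pow_le_pow_right₀ (by nlinarith [sq_nonneg w]) (by omega)
        _ ≤ (K*(w^2+c))^(mm+1) := pow_le_pow_left₀ (by positivity) (hbound w) _
        _ = K^(mm+1) * (w^2+c)^(mm+1) := mul_pow _ _ _
    calc (w^2)^j = (w^2)^j * (1+w^2) * (1+w^2)⁻¹ := by field_simp
      _ ≤ K^(mm+1)*(w^2+c)^(mm+1) * (1+w^2)⁻¹ :=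
          mul_le_mul_of_nonneg_right key (by positivity)
      _ = K^(mm+1)*(1+w^2)⁻¹*(w^2+c)^(mm+1) := by ring

lemma I00 (c : ℝ) (hc : 0 < c) :
    ∫ w in Set.Ioi (0:ℝ), (w^2+c)⁻¹ = π/(2*Real.sqrt c) := by
  have hs : 0 < Real.sqrt c := Real.sqrt_pos.mpr hc
  have key := integral_comp_mul_left_Ioi (fun w => (w^2+c)⁻¹) 0 hs
  rw [mul_zero] at key
  have h2 : ∫ x in Set.Ioi (0:ℝ), ((Real.sqrt c*x)^2+c)⁻¹ = c⁻¹ * (π/2) := by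
    have hpt : ∀ x : ℝ, ((Real.sqrt c*x)^2+c)⁻¹ = c⁻¹ * (1+x^2)⁻¹ := by
      intro x
      rw [mul_pow, Real.sq_sqrt hc.le, ← mul_inv]
      congr 1
      ring
    simp_rw [hpt]
    rw [MeasureTheory.integral_const_mul, integral_Ioi_inv_one_add_sq]
    norm_num
  rw [h2, smul_eq_mul] at key
  have hcs : Real.sqrt c * Real.sqrt c = c := Real.mul_self_sqrt hc.le
  have : ∫ w in Set.Ioi (0:ℝ), (w^2+c)⁻¹ = Real.sqrt c * (c⁻¹ * (π/2)) := by
    rw [key]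
    field_simp
  rw [this]
  rw [eq_div_iff (by positivity)]
  calc Real.sqrt c * (c⁻¹ * (π/2)) * (2 * Real.sqrt c) = (Real.sqrt c * Real.sqrt c) * c⁻¹ * π := by ring
    _ = π := by rw [hcs, mul_inv_cancel₀ hc.ne', one_mul]

lemma rec1 (c : ℝ) (hc : 0 < c) {k mm : ℕ} (hk : k ≤ mm) :
    (2*(mm:ℝ)+2) * ∫ w in Set.Ioi (0:ℝ), (w^2)^(k+1) / (w^2+c)^(mm+2)
    = (2*(k:ℝ)+1) * ∫ w in Set.Ioi (0:ℝ), (w^2)^k / (w^2+c)^(mm+1) := by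
  set f : ℝ → ℝ := fun w => w * (w^2)^k * ((w^2+c)^(mm+1))⁻¹ with hf
  set f' : ℝ → ℝ := fun w =>
    (2*(k:ℝ)+1) * ((w^2)^k / (w^2+c)^(mm+1)) - (2*(mm:ℝ)+2) * ((w^2)^(k+1) / (w^2+c)^(mm+2)) with hf'
  have hupos : ∀ w : ℝ, (0:ℝ) < w^2+c := fun w => by positivity
  have hderiv : ∀ w : ℝ, HasDerivAt f (f' w) w := by
    intro w
    have hu : HasDerivAt (fun w : ℝ => w^2+c) (2*w) w := by
      simpa using (hasDerivAt_pow 2 w).add_const c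
    have hd : HasDerivAt (fun w : ℝ => (w^2+c)^(mm+1))
        ((mm+1 : ℕ) * (w^2+c)^mm * (2*w)) w := by
      simpa using hu.fun_pow (mm+1)
    have hdne : ((w^2+c)^(mm+1) : ℝ) ≠ 0 := by positivity
    have hinv := hd.fun_inv hdne
    have hx : HasDerivAt (fun w : ℝ => w * (w^2)^k) ((2*(k:ℝ)+1) * (w^2)^k) w := by
      have heq : (fun w : ℝ => w * (w^2)^k) = fun w : ℝ => w^(2*k+1) := by
        funext w
        rw [← pow_mul, ← pow_succ']
    -- w^(2k+1) ?
      rw [heq]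
      have := hasDerivAt_pow (2*k+1) w
      simpa [pow_mul, Nat.add_sub_cancel] using this
    have := hx.fun_mul hinv
    refine this.congr_deriv ?_
    rw [hf']
    have h2 : ((w^2+c)^(mm+1))^2 = (w^2+c)^(2*mm+2) := by
      rw [← pow_mul]; congr 1; omega
    field_simp [h2]
    push_cast; ring
  have hcont : ContinuousWithinAt f (Set.Ici (0:ℝ)) 0 :=
    ((hderiv 0).continuousAt).continuousWithinAt
  have htend : Filter.Tendsto f Filter.atTop (nhds 0) := by
    apply tendsto_of_tendsto_of_tendsto_of_le_of_le' tendsto_const_nhds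
      tendsto_inv_atTop_zero (g := fun _ => (0:ℝ))
    · filter_upwards [Filter.eventually_ge_atTop (1:ℝ)] with w hw
      have := hupos w
      positivity
    · filter_upwards [Filter.eventually_ge_atTop (1:ℝ)] with w hw
      have hw0 : (0:ℝ) < w := by linarith
      show w * (w^2)^k * ((w^2+c)^(mm+1))⁻¹ ≤ w⁻¹
      have hnum : w * (w^2)^k = w^(2*k+1) := by
        rw [← pow_mul, ← pow_succ']
      rw [hnum]
      rw [← div_eq_mul_inv, inv_eq_one_div w, div_le_div_iff₀ (by positivity) hw0]
      calc w^(2*k+1) * w = w^(2*k+2) := by rw [← pow_succ]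
        _ ≤ w^(2*mm+2) := pow_le_pow_right₀ hw (by omega)
        _ = (w^2)^(mm+1) := by rw [show 2*mm+2 = 2*(mm+1) by omega, pow_mul]
        _ ≤ (w^2+c)^(mm+1) := pow_le_pow_left₀ (sq_nonneg w) (by linarith) _
        _ = 1 * (w^2+c)^(mm+1) := (one_mul _).symm
  have hint1 := integrable_pow_div c hc hk
  have hint2 := integrable_pow_div c hc (show k+1 ≤ mm+1 by omega)
  have hf'int : IntegrableOn f' (Set.Ioi (0:ℝ)) := by
    apply Integrable.integrableOn
    exact (hint1.const_mul _).sub (hint2.const_mul _)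
  have hFTC := integral_Ioi_of_hasDerivAt_of_tendsto hcont
    (fun x _ => hderiv x) hf'int htend
  have hf0 : f 0 = 0 := by rw [hf]; simp
  rw [hf0, sub_zero] at hFTC
  rw [hf'] at hFTC
  rw [MeasureTheory.integral_sub ((hint1.const_mul _).integrableOn)
      ((hint2.const_mul _).integrableOn),
    MeasureTheory.integral_const_mul, MeasureTheory.integral_const_mul] at hFTC
  have e : mm+1+1 = mm+2 := by omega
  rw [e] at hFTC
  linarith [hFTC]

lemma rec2 (c : ℝ) (hc : 0 < c) {k mm : ℕ} (hk : k ≤ mm) :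
    ∫ w in Set.Ioi (0:ℝ), (w^2)^k / (w^2+c)^(mm+1)
    = (∫ w in Set.Ioi (0:ℝ), (w^2)^(k+1) / (w^2+c)^(mm+2))
      + c * ∫ w in Set.Ioi (0:ℝ), (w^2)^k / (w^2+c)^(mm+2) := by
  rw [← MeasureTheory.integral_const_mul]
  rw [← MeasureTheory.integral_add
      ((integrable_pow_div c hc (show k+1 ≤ mm+1 by omega)).integrableOn)
      (((integrable_pow_div c hc (show k ≤ mm+1 by omega)).const_mul c).integrableOn)]
  apply MeasureTheory.setIntegral_congr_fun measurableSet_Ioi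
  intro w _
  have hu : (w^2+c) ≠ 0 := by positivity
  field_simp
  ring

noncomputable def Tc (k mm : ℕ) : ℝ :=
  (Nat.factorial (2*k) : ℝ) * (Nat.factorial (2*(mm-k)) : ℝ) /
    ((Nat.factorial k : ℝ) * (Nat.factorial (mm-k) : ℝ) * (Nat.factorial mm : ℝ) * 4^mm)

lemma Tc_zero_zero : Tc 0 0 = 1 := by
  rw [Tc]; norm_num

lemma Tc_zero_succ (mm : ℕ) : Tc 0 (mm+1) = (2*(mm:ℝ)+1)/(2*(mm:ℝ)+2) * Tc 0 mm := by
  rw [Tc, Tc]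
  simp only [Nat.sub_zero, Nat.mul_zero, Nat.factorial_zero]
  have f1 : ((2*(mm+1)).factorial : ℝ) = (2*(mm:ℝ)+2)*((2*(mm:ℝ)+1)*((2*mm).factorial : ℝ)) := by
    rw [show 2*(mm+1) = (2*mm+1)+1 by omega, Nat.factorial_succ, Nat.factorial_succ]
    push_cast; ring
  have f2 : (((mm+1)).factorial : ℝ) = ((mm:ℝ)+1)*(mm.factorial : ℝ) := by
    rw [Nat.factorial_succ]; push_cast; ring
  rw [f1, f2]
  have h1 : ((2*mm).factorial : ℝ) ≠ 0 := by positivity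
  have h2 : (mm.factorial : ℝ) ≠ 0 := by positivity
  have h3 : (4:ℝ)^mm ≠ 0 := by positivity
  have h4 : ((mm:ℝ)+1) ≠ 0 := by positivity
  have h5 : (2*(mm:ℝ)+2) ≠ 0 := by positivity
  have h6 : (4:ℝ)^(mm+1) = 4*4^mm := by rw [pow_succ]; ring
  rw [h6]
  field_simp
  ring

lemma Tc_succ_succ (k mm : ℕ) (hk : k ≤ mm) :
    Tc (k+1) (mm+1) = (2*(k:ℝ)+1)/(2*(mm:ℝ)+2) * Tc k mm := by
  rw [Tc, Tc]
  have e1 : mm+1-(k+1) = mm-k := by omega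
  rw [e1]
  have f1 : ((2*(k+1)).factorial : ℝ) = (2*(k:ℝ)+2)*((2*(k:ℝ)+1)*((2*k).factorial : ℝ)) := by
    rw [show 2*(k+1) = (2*k+1)+1 by omega, Nat.factorial_succ, Nat.factorial_succ]
    push_cast; ring
  have f2 : (((k+1)).factorial : ℝ) = ((k:ℝ)+1)*(k.factorial : ℝ) := by
    rw [Nat.factorial_succ]; push_cast; ring
  have f3 : (((mm+1)).factorial : ℝ) = ((mm:ℝ)+1)*(mm.factorial : ℝ) := by
    rw [Nat.factorial_succ]; push_cast; ring
  rw [f1, f2, f3]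
  have h1 : ((2*k).factorial : ℝ) ≠ 0 := by positivity
  have h2 : (k.factorial : ℝ) ≠ 0 := by positivity
  have h2' : (mm.factorial : ℝ) ≠ 0 := by positivity
  have h2'' : ((mm-k).factorial : ℝ) ≠ 0 := by positivity
  have h2''' : ((2*(mm-k)).factorial : ℝ) ≠ 0 := by positivity
  have h3 : (4:ℝ)^mm ≠ 0 := by positivity
  have h4 : ((mm:ℝ)+1) ≠ 0 := by positivity
  have h4' : ((k:ℝ)+1) ≠ 0 := by positivity
  have h5 : (2*(mm:ℝ)+2) ≠ 0 := by positivity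
  have h6 : (4:ℝ)^(mm+1) = 4*4^mm := by rw [pow_succ]; ring
  rw [h6]
  field_simp
  ring

lemma Ival (c : ℝ) (hc : 0 < c) :
    ∀ mm k, k ≤ mm →
      ∫ w in Set.Ioi (0:ℝ), (w^2)^k / (w^2+c)^(mm+1)
      = π/2 * Tc k mm * c^k * Real.sqrt c / c^(mm+1) := by
  intro mm
  induction mm with
  | zero =>
    intro k hk
    have hk0 : k = 0 := by omega
    subst hk0
    have h : ∀ w ∈ Set.Ioi (0:ℝ), ((w:ℝ)^2)^0/(w^2+c)^(0+1) = (w^2+c)⁻¹ := by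
      intro w _; norm_num
    rw [MeasureTheory.setIntegral_congr_fun measurableSet_Ioi h, I00 c hc, Tc_zero_zero]
    have hcs : Real.sqrt c * Real.sqrt c = c := Real.mul_self_sqrt hc.le
    have hs : (0:ℝ) < Real.sqrt c := Real.sqrt_pos.mpr hc
    rw [pow_zero, pow_one]
    have key : Real.sqrt c / c = 1 / Real.sqrt c := by
      rw [div_eq_div_iff hc.ne' hs.ne']
      linarith [hcs]
    calc π/(2*Real.sqrt c) = π/2 * (1/Real.sqrt c) := by ring
      _ = π/2 * (Real.sqrt c/c) := by rw [key]
      _ = π/2 * 1 * 1 * Real.sqrt c / c := by ring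
  | succ mm ih =>
    intro k hk
    have hc1 : c ≠ 0 := hc.ne'
    have hmm : (2*(mm:ℝ)+2) ≠ 0 := by positivity
    cases k with
    | zero =>
      have h1 := rec2 c hc (show 0 ≤ mm by omega)
      have h2 := rec1 c hc (show 0 ≤ mm by omega)
      have hIH := ih 0 (by omega)
      rw [hIH] at h1 h2
      show ∫ w in Set.Ioi (0:ℝ), (w^2)^0/(w^2+c)^(mm+2)
        = π/2 * Tc 0 (mm+1) * c^0 * Real.sqrt c / c^(mm+2)
      rw [Tc_zero_succ]
      have hX : c * ∫ w in Set.Ioi (0:ℝ), (w^2)^0/(w^2+c)^(mm+2)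
          = π/2 * Tc 0 mm * c^0 * Real.sqrt c / c^(mm+1)
            - (∫ w in Set.Ioi (0:ℝ), (w^2)^(0+1)/(w^2+c)^(mm+2)) := by
        linarith [h1]
      have hI1 : (∫ w in Set.Ioi (0:ℝ), (w^2)^(0+1)/(w^2+c)^(mm+2))
          = (2*(0:ℝ)+1) * (π/2 * Tc 0 mm * c^0 * Real.sqrt c / c^(mm+1)) / (2*(mm:ℝ)+2) := by
        rw [eq_div_iff hmm]
        push_cast at h2 ⊢
        linarith [h2]
      rw [hI1] at hX
      have hcp : (c:ℝ)^(mm+2) = c * c^(mm+1) := by rw [pow_succ]; ring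
      have hcpne : (c:ℝ)^(mm+1) ≠ 0 := by positivity
      apply mul_left_cancel₀ hc1
      rw [hX, hcp]
      field_simp
      ring
    | succ k =>
      have hkm : k ≤ mm := by omega
      have h2 := rec1 c hc hkm
      have hIH := ih k hkm
      rw [hIH] at h2
      show ∫ w in Set.Ioi (0:ℝ), (w^2)^(k+1)/(w^2+c)^(mm+2)
        = π/2 * Tc (k+1) (mm+1) * c^(k+1) * Real.sqrt c / c^(mm+2)
      rw [Tc_succ_succ k mm hkm]
      have hcp : (c:ℝ)^(mm+2) = c * c^(mm+1) := by rw [pow_succ]; ring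
      have hck : (c:ℝ)^(k+1) = c * c^k := by rw [pow_succ]; ring
      have hcpne : (c:ℝ)^(mm+1) ≠ 0 := by positivity
      have hckne : (c:ℝ)^k ≠ 0 := by positivity
      apply mul_left_cancel₀ hmm
      rw [h2, hcp, hck]
      field_simp

lemma D_lower (ha : -1 < a) :
    ∀ x : ℝ, min (1/2) ((a+1)/2) * (1+x^2)^2 ≤ x^4+2*a*x^2+1 := by
  intro x
  set ε : ℝ := min (1/2) ((a+1)/2) with hε
  have he1 : ε ≤ 1/2 := min_le_left _ _
  have he2 : ε ≤ (a+1)/2 := min_le_right _ _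
  have key : x^4+2*a*x^2+1 - ε*(1+x^2)^2
      = (1-ε)*(x^2-1)^2 + (2*a+2-4*ε)*x^2 := by ring
  nlinarith [mul_nonneg (show (0:ℝ) ≤ 1-ε by linarith) (sq_nonneg (x^2-1)),
    mul_nonneg (show (0:ℝ) ≤ 2*a+2-4*ε by linarith) (sq_nonneg x)]

lemma eps_pos (ha : -1 < a) : (0:ℝ) < min (1/2) ((a+1)/2) := by
  apply lt_min (by norm_num) (by linarith)

lemma D_pos (ha : -1 < a) : ∀ x : ℝ, (0:ℝ) < x^4+2*a*x^2+1 := by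
  intro x
  have h1 := D_lower ha x
  have h2 := eps_pos ha
  have h3 : (0:ℝ) < 1+x^2 := by positivity
  nlinarith [mul_pos h2 (pow_pos h3 2)]

lemma integrableD (ha : -1 < a) (m p : ℕ) (hp : p ≤ 2*m+1) :
    Integrable (fun x : ℝ => (x^2)^p / (x^4+2*a*x^2+1)^(m+1)) := by
  set ε : ℝ := min (1/2) ((a+1)/2) with hε
  have hεp := eps_pos ha
  apply Integrable.mono' ((integrable_inv_one_add_sq).const_mul ((ε^(m+1))⁻¹))
  · apply Continuous.aestronglyMeasurable
    apply Continuous.div (by continuity) (by continuity)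
    intro x
    exact ne_of_gt (pow_pos (D_pos ha x) _)
  · filter_upwards with x
    have hDp := D_pos ha x
    have hDpow : (0:ℝ) < (x^4+2*a*x^2+1)^(m+1) := pow_pos hDp _
    have h1x : (0:ℝ) < 1+x^2 := by positivity
    rw [Real.norm_eq_abs, abs_of_nonneg (by positivity)]
    rw [div_le_iff₀ hDpow]
    have hd1 : (ε*(1+x^2)^2)^(m+1) ≤ (x^4+2*a*x^2+1)^(m+1) :=
      pow_le_pow_left₀ (by positivity) (D_lower ha x) _
    have hd2 : (ε*(1+x^2)^2)^(m+1) = ε^(m+1) * (1+x^2)^(2*m+2) := by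
      rw [mul_pow, ← pow_mul, show 2*(m+1) = 2*m+2 by omega]
    have hnum : (x^2)^p * (1+x^2) ≤ (1+x^2)^(2*m+2) := by
      calc (x^2)^p * (1+x^2) ≤ (1+x^2)^p * (1+x^2) :=
            mul_le_mul_of_nonneg_right
              (pow_le_pow_left₀ (sq_nonneg x) (by linarith) p) h1x.le
        _ = (1+x^2)^(p+1) := (pow_succ _ _).symm
        _ ≤ (1+x^2)^(2*m+2) := pow_le_pow_right₀ (by nlinarith [sq_nonneg x]) (by omega)
    calc (x^2)^p = ((x^2)^p * (1+x^2)) * (1+x^2)⁻¹ := by field_simp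
      _ ≤ (1+x^2)^(2*m+2) * (1+x^2)⁻¹ :=
          mul_le_mul_of_nonneg_right hnum (by positivity)
      _ = ε^(m+1) * (1+x^2)^(2*m+2) * ((ε^(m+1)) * (1+x^2))⁻¹ := by
          rw [mul_inv]
          have hεne : (ε:ℝ)^(m+1) ≠ 0 := by positivity
          field_simp
      _ ≤ (x^4+2*a*x^2+1)^(m+1) * ((ε^(m+1)) * (1+x^2))⁻¹ := by
          apply mul_le_mul_of_nonneg_right _ (by positivity)
          rw [← hd2]; exact hd1
      _ = (ε^(m+1))⁻¹ * (1+x^2)⁻¹ * (x^4+2*a*x^2+1)^(m+1) := by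
          rw [mul_inv]; ring

lemma inv_image : (fun x : ℝ => x⁻¹) '' (Set.Ioi 0) = Set.Ioi 0 := by
  ext w
  constructor
  · rintro ⟨x, hx, rfl⟩
    exact inv_pos.mpr (show (0:ℝ) < x from hx)
  · intro hw
    exact ⟨w⁻¹, inv_pos.mpr (show (0:ℝ) < w from hw), inv_inv w⟩

lemma step_inv (ha : -1 < a) (m : ℕ) :
    ∫ x in Set.Ioi (0:ℝ), (x^2)^0/(x^4+2*a*x^2+1)^(m+1)
    = ∫ x in Set.Ioi (0:ℝ), (x^2)^(2*m+1)/(x^4+2*a*x^2+1)^(m+1) := by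
  have h := integral_image_eq_integral_abs_deriv_smul measurableSet_Ioi
    (f := fun x : ℝ => x⁻¹) (f' := fun x : ℝ => -(x^2)⁻¹)
    (fun x hx => (hasDerivAt_inv (ne_of_gt hx)).hasDerivWithinAt)
    (fun x _ y _ hxy => inv_injective hxy)
    (fun x => (x^2)^0/(x^4+2*a*x^2+1)^(m+1))
  rw [inv_image] at h
  rw [h]
  apply MeasureTheory.setIntegral_congr_fun measurableSet_Ioi
  intro x hx
  have hx0 : (0:ℝ) < x := hx
  have hxne : x ≠ 0 := ne_of_gt hx0
  have hD := D_pos ha x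
  have hDinv : (x⁻¹)^4+2*a*(x⁻¹)^2+1 = (x^4+2*a*x^2+1)/x^4 := by
    field_simp
    ring
  have key : ((x⁻¹)^4+2*a*(x⁻¹)^2+1)^(m+1)
      = (x^4+2*a*x^2+1)^(m+1) / (x^4)^(m+1) := by rw [hDinv, div_pow]
  show |(-(x^2)⁻¹)| • (((x⁻¹)^2)^0/((x⁻¹)^4+2*a*(x⁻¹)^2+1)^(m+1))
    = (x^2)^(2*m+1)/(x^4+2*a*x^2+1)^(m+1)
  rw [smul_eq_mul, abs_neg, abs_of_pos (show (0:ℝ) < (x^2)⁻¹ by positivity), key]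
  have hxp : (x^4)^(m+1) = x^2*(x^2)^(2*m+1) := by
    rw [← pow_succ', ← pow_mul, ← pow_mul]
    congr 1
    omega
  have hDne : (x^4+2*a*x^2+1)^(m+1) ≠ 0 := by positivity
  rw [pow_zero]
  field_simp
  rw [hxp]

lemma pointwise_id (ha : -1 < a) (m : ℕ) {x : ℝ} (hx : 0 < x) :
    ((x^2)^0 + (x^2)^(2*m+1))/(x^4+2*a*x^2+1)^(m+1)
    = |1+(x^2)⁻¹| * (chebG m ((x-x⁻¹)^2) / (((x-x⁻¹)^2+(2*a+2))^(m+1))) := by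
  have hxne : x ≠ 0 := ne_of_gt hx
  have hD := D_pos ha x
  have hw : x^2*((x-x⁻¹)^2+(2*a+2)) = x^4+2*a*x^2+1 := by
    field_simp
    ring
  have hx2 : (0:ℝ) < x^2 := by positivity
  have hwc : (0:ℝ) < (x-x⁻¹)^2+(2*a+2) := by
    nlinarith [hw, hD, hx2]
  have hDpow : (x^4+2*a*x^2+1)^(m+1) = (x^2)^(m+1) * ((x-x⁻¹)^2+(2*a+2))^(m+1) := by
    rw [← mul_pow, hw]
  have hnum : (x^2)^0 + (x^2)^(2*m+1) = x^(2*m+1) * (x^(2*m+1) + (x⁻¹)^(2*m+1)) := by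
    have h1 : x^(2*m+1) * (x⁻¹)^(2*m+1) = 1 := by
      rw [← mul_pow, mul_inv_cancel₀ hxne, one_pow]
    have h2 : x^(2*m+1) * x^(2*m+1) = (x^2)^(2*m+1) := by
      rw [← pow_add, ← pow_mul]
      congr 1
      omega
    rw [pow_zero, mul_add, h1, h2, add_comm]
  rw [hnum, (cheb_key m hxne).1, hDpow]
  rw [abs_of_pos (show (0:ℝ) < 1+(x^2)⁻¹ by positivity)]
  have h3 : (x^2)^(m+1) = x^(2*m+1) * x := by
    rw [← pow_mul, show 2*(m+1) = (2*m+1)+1 by omega, pow_succ]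
  rw [h3]
  have hUne : ((x-x⁻¹)^2+(2*a+2))^(m+1) ≠ 0 := ne_of_gt (pow_pos hwc _)
  have hPne : x^(2*m+1) ≠ 0 := pow_ne_zero _ hxne
  rw [mul_assoc (x^(2*m+1)) x (((x-x⁻¹)^2+(2*a+2))^(m+1))]
  rw [mul_div_mul_left _ _ hPne]
  field_simp

lemma sub_image : (fun x : ℝ => x - x⁻¹) '' (Set.Ioi 0) = Set.univ := by
  ext w
  simp only [Set.mem_image, Set.mem_univ, iff_true]
  set s := Real.sqrt (w^2+4) with hsdef
  have hs2 : s^2 = w^2+4 := Real.sq_sqrt (by positivity)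
  have hs0 : 0 < s := Real.sqrt_pos.mpr (by positivity)
  have hxpos : 0 < (w+s)/2 := by nlinarith [hs2, hs0]
  refine ⟨(w+s)/2, hxpos, ?_⟩
  have hxne : (w+s)/2 ≠ 0 := ne_of_gt hxpos
  have hws : w + s ≠ 0 := by
    intro hcon
    rw [hcon] at hxpos
    norm_num at hxpos
  show (w+s)/2 - ((w+s)/2)⁻¹ = w
  field_simp
  linear_combination hs2

lemma step_subst (ha : -1 < a) (m : ℕ) :
    ∫ x in Set.Ioi (0:ℝ),
      |1+(x^2)⁻¹| * (chebG m ((x-x⁻¹)^2) / (((x-x⁻¹)^2+(2*a+2))^(m+1)))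
    = ∫ w : ℝ, chebG m (w^2)/((w^2+(2*a+2))^(m+1)) := by
  have hmono : StrictMonoOn (fun x : ℝ => x - x⁻¹) (Set.Ioi 0) := by
    intro x hx y hy hxy
    have hx0 : (0:ℝ) < x := hx
    have h1 : 1/y < 1/x := one_div_lt_one_div_of_lt hx0 hxy
    rw [one_div, one_div] at h1
    show x - x⁻¹ < y - y⁻¹
    linarith
  have h := integral_image_eq_integral_abs_deriv_smul measurableSet_Ioi
    (f := fun x : ℝ => x - x⁻¹) (f' := fun x : ℝ => 1+(x^2)⁻¹)
    (fun x hx => by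
      have hd := (hasDerivAt_id x).sub (hasDerivAt_inv (ne_of_gt (show (0:ℝ) < x from hx)))
      simp only [sub_neg_eq_add] at hd
      exact hd.hasDerivWithinAt)
    hmono.injOn
    (fun w => chebG m (w^2)/((w^2+(2*a+2))^(m+1)))
  rw [sub_image] at h
  rw [MeasureTheory.setIntegral_univ] at h
  simp only [smul_eq_mul] at h
  rw [← h]

lemma step_even (a : ℝ) (m : ℕ) :
    ∫ w : ℝ, chebG m (w^2)/((w^2+(2*a+2))^(m+1))
    = 2 * ∫ w in Set.Ioi (0:ℝ), chebG m (w^2)/((w^2+(2*a+2))^(m+1)) := by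
  rw [← integral_comp_abs (f := fun w => chebG m (w^2)/((w^2+(2*a+2))^(m+1)))]
  have : (fun x : ℝ => chebG m (|x|^2)/((|x|^2+(2*a+2))^(m+1)))
      = fun x : ℝ => chebG m (x^2)/((x^2+(2*a+2))^(m+1)) := by
    funext x
    rw [sq_abs]
  rw [this]

lemma step_sum (a : ℝ) (hc : (0:ℝ) < 2*a+2) (m : ℕ) :
    ∫ w in Set.Ioi (0:ℝ), chebG m (w^2)/((w^2+(2*a+2))^(m+1))
    = ∑ k ∈ Finset.range (m+1), (Nat.choose (m+k) (2*k) : ℝ) *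
        (π/2 * Tc k m * (2*a+2)^k * Real.sqrt (2*a+2) / (2*a+2)^(m+1)) := by
  have hpt : ∀ w ∈ Set.Ioi (0:ℝ), chebG m (w^2)/((w^2+(2*a+2))^(m+1))
      = ∑ k ∈ Finset.range (m+1),
          (Nat.choose (m+k) (2*k):ℝ) * ((w^2)^k/((w^2+(2*a+2))^(m+1))) := by
    intro w _
    rw [chebG, Finset.sum_div]
    apply Finset.sum_congr rfl
    intro k _
    rw [mul_div_assoc]
  rw [MeasureTheory.setIntegral_congr_fun measurableSet_Ioi hpt]
  rw [MeasureTheory.integral_finset_sum _ (fun k hk =>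
    ((integrable_pow_div _ hc (show k ≤ m by
      simp only [Finset.mem_range] at hk; omega)).const_mul _).integrableOn)]
  apply Finset.sum_congr rfl
  intro k hk
  simp only [Finset.mem_range] at hk
  rw [MeasureTheory.integral_const_mul, Ival _ hc m k (by omega)]

lemma term_id (ha : -1 < a) (m k : ℕ) (hk : k ≤ m) :
    (Nat.choose (m+k) (2*k) : ℝ) *
      (π/2 * Tc k m * (2*a+2)^k * Real.sqrt (2*a+2) / (2*a+2)^(m+1))
    = π / ((2:ℝ)^((m:ℝ)+3/2) * (a+1)^((m:ℝ)+1/2)) *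
        ((Nat.choose (2*(m-k)) (m-k) : ℝ) * (Nat.choose (m+k) k : ℝ) * 2^k / 4^m * (a+1)^k) := by
  have hA : (0:ℝ) < a+1 := by linarith
  have hsA : Real.sqrt (a+1) * Real.sqrt (a+1) = a+1 := Real.mul_self_sqrt hA.le
  have hs2 : Real.sqrt 2 * Real.sqrt 2 = 2 := Real.mul_self_sqrt (by norm_num)
  have hsApos : (0:ℝ) < Real.sqrt (a+1) := Real.sqrt_pos.mpr hA
  have hs2pos : (0:ℝ) < Real.sqrt 2 := Real.sqrt_pos.mpr (by norm_num)
  have hc2 : (2*a+2 : ℝ) = 2*(a+1) := by ring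
  have hsplit : Real.sqrt (2*a+2) = Real.sqrt 2 * Real.sqrt (a+1) := by
    rw [hc2, Real.sqrt_mul (by norm_num)]
  have hrp2 : (2:ℝ)^((m:ℝ)+3/2) = 2^m * (2*Real.sqrt 2) := by
    rw [show ((m:ℝ)+3/2) = ((m:ℝ) + 1) + (1/2 : ℝ) by ring]
    rw [Real.rpow_add (by norm_num), Real.rpow_add (by norm_num),
      Real.rpow_natCast, Real.rpow_one, ← Real.sqrt_eq_rpow]
    ring
  have hrpA : (a+1:ℝ)^((m:ℝ)+1/2) = (a+1)^m * Real.sqrt (a+1) := by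
    rw [show ((m:ℝ)+1/2) = (m:ℝ) + (1/2 : ℝ) by ring]
    rw [Real.rpow_add hA, Real.rpow_natCast, ← Real.sqrt_eq_rpow]
  rw [hrp2, hrpA, hsplit, hc2, Tc]
  -- cast the three binomials to factorials
  have hb1 : (Nat.choose (m+k) (2*k) : ℝ)
      = ((m+k).factorial : ℝ)/(((2*k).factorial : ℝ) * ((m-k).factorial : ℝ)) := by
    rw [Nat.cast_choose ℝ (show 2*k ≤ m+k by omega), show m+k-2*k = m-k from by omega]
  have hb2 : (Nat.choose (2*(m-k)) (m-k) : ℝ)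
      = ((2*(m-k)).factorial : ℝ)/(((m-k).factorial : ℝ) * ((m-k).factorial : ℝ)) := by
    rw [Nat.cast_choose ℝ (show m-k ≤ 2*(m-k) by omega), show 2*(m-k)-(m-k) = m-k from by omega]
  have hb3 : (Nat.choose (m+k) k : ℝ)
      = ((m+k).factorial : ℝ)/((k.factorial : ℝ) * (m.factorial : ℝ)) := by
    rw [Nat.cast_choose ℝ (show k ≤ m+k by omega), show m+k-k = m from by omega]
  rw [hb1, hb2, hb3]
  -- powers of (2*(a+1))
  have hp1 : (2*(a+1):ℝ)^k = 2^k * (a+1)^k := mul_pow _ _ _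
  have hp2 : (2*(a+1):ℝ)^(m+1)
      = (Real.sqrt 2*Real.sqrt 2)*2^m * ((a+1)^m * (Real.sqrt (a+1)*Real.sqrt (a+1))) := by
    rw [hs2, hsA, mul_pow, pow_succ, pow_succ]
    ring
  rw [hp1, hp2]
  have hAm : ((a+1):ℝ)^m ≠ 0 := by positivity
  have h2m : ((2:ℝ))^m ≠ 0 := by positivity
  have h4m : ((4:ℝ))^m ≠ 0 := by positivity
  have hf1 : ((2*k).factorial : ℝ) ≠ 0 := by positivity
  have hf2 : ((m-k).factorial : ℝ) ≠ 0 := by positivity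
  have hf3 : ((2*(m-k)).factorial : ℝ) ≠ 0 := by positivity
  have hf4 : (k.factorial : ℝ) ≠ 0 := by positivity
  have hf5 : (m.factorial : ℝ) ≠ 0 := by positivity
  have hf6 : ((m+k).factorial : ℝ) ≠ 0 := by positivity
  have h42 : (4:ℝ)^m = 2^m * 2^m := by rw [← mul_pow]; norm_num
  rw [h42]
  field_simp

theorem integral_N04 (a : ℝ) (ha : -1 < a) (m : ℕ) :
    ∫ x in Set.Ioi (0:ℝ), 1 / (x^4 + 2*a*x^2 + 1)^(m+1) =
      π / ((2:ℝ) ^ ((m:ℝ) + 3/2) * (a + 1) ^ ((m:ℝ) + 1/2)) *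
        jacobiP m ((m:ℝ) + 1/2) (-(m:ℝ) - 1/2) a := by
  have hc : (0:ℝ) < 2*a+2 := by linarith
  have h0 : ∫ x in Set.Ioi (0:ℝ), 1/(x^4+2*a*x^2+1)^(m+1)
      = ∫ x in Set.Ioi (0:ℝ), (x^2)^0/(x^4+2*a*x^2+1)^(m+1) := by
    apply MeasureTheory.setIntegral_congr_fun measurableSet_Ioi
    intro x _
    simp only [pow_zero]
  have hi0 : IntegrableOn (fun x : ℝ => (x^2)^0/(x^4+2*a*x^2+1)^(m+1)) (Set.Ioi 0) :=
    (integrableD ha m 0 (by omega)).integrableOn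
  have hi1 : IntegrableOn (fun x : ℝ => (x^2)^(2*m+1)/(x^4+2*a*x^2+1)^(m+1)) (Set.Ioi 0) :=
    (integrableD ha m (2*m+1) (by omega)).integrableOn
  have hsym : ∫ x in Set.Ioi (0:ℝ), (x^2)^0/(x^4+2*a*x^2+1)^(m+1)
      = (1/2) * ∫ x in Set.Ioi (0:ℝ), ((x^2)^0 + (x^2)^(2*m+1))/(x^4+2*a*x^2+1)^(m+1) := by
    have hadd : ∫ x in Set.Ioi (0:ℝ), ((x^2)^0 + (x^2)^(2*m+1))/(x^4+2*a*x^2+1)^(m+1)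
        = (∫ x in Set.Ioi (0:ℝ), (x^2)^0/(x^4+2*a*x^2+1)^(m+1))
          + ∫ x in Set.Ioi (0:ℝ), (x^2)^(2*m+1)/(x^4+2*a*x^2+1)^(m+1) := by
      rw [← MeasureTheory.integral_add hi0 hi1]
      apply MeasureTheory.setIntegral_congr_fun measurableSet_Ioi
      intro x _
      simp only [add_div]
    rw [hadd, ← step_inv ha m]
    ring
  have hpt : ∫ x in Set.Ioi (0:ℝ), ((x^2)^0 + (x^2)^(2*m+1))/(x^4+2*a*x^2+1)^(m+1)
      = ∫ x in Set.Ioi (0:ℝ),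
          |1+(x^2)⁻¹| * (chebG m ((x-x⁻¹)^2) / (((x-x⁻¹)^2+(2*a+2))^(m+1))) := by
    apply MeasureTheory.setIntegral_congr_fun measurableSet_Ioi
    intro x hx
    exact pointwise_id ha m hx
  rw [h0, hsym, hpt, step_subst ha m, step_even a m]
  rw [show (1/2 : ℝ) * (2 * ∫ w in Set.Ioi (0:ℝ), chebG m (w^2)/((w^2+(2*a+2))^(m+1)))
    = ∫ w in Set.Ioi (0:ℝ), chebG m (w^2)/((w^2+(2*a+2))^(m+1)) by ring]
  rw [step_sum a hc m, jacobi_expand m a, Finset.mul_sum]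
  apply Finset.sum_congr rfl
  intro k hk
  simp only [Finset.mem_range] at hk
  exact term_id ha m k (by omega)
end

section
/- For a fixed nonnegative integer m, the function q(m,z) = 1 - √2 i (1-z²)^{-(m+1/2)} (with a fixed branch of the power) has, for each integer k with 0 ≤ k ≤ m, a zero z_k* characterized by 1 - (z_k*)² = 2^{1/(2m+1)} e^{iθ_k} where (m+1/2)θ_k = π/2 + 2πk, and these enumerate all zeros with 0 ≤ θ < 2π. -/
open Real Complex

private lemma exp_pi_div_two_mul_I' : Complex.exp ((π/2 : ℝ) * Complex.I) = Complex.I := by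
  rw [Complex.exp_mul_I, ← Complex.ofReal_cos, ← Complex.ofReal_sin,
    Real.cos_pi_div_two, Real.sin_pi_div_two]
  simp

private lemma exp_shift (k : ℤ) :
    Complex.exp (((π/2 + 2*π*k : ℝ)) * Complex.I) = Complex.I := by
  have h : (((π/2 + 2*π*(k:ℝ)) : ℝ) : ℂ) * Complex.I
      = (π/2 : ℝ) * Complex.I + (k:ℤ) * (2*(π:ℝ)*Complex.I) := by push_cast; ring
  rw [h, Complex.exp_add, Complex.exp_int_mul_two_pi_mul_I, mul_one, exp_pi_div_two_mul_I']

/-- The zeros of `q(m,z) = 1 - √2 i (1-z²)^{-(m+1/2)}` (branch with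
`(1-z²)^{m+1/2} = |1-z²|^{m+1/2} e^{i(m+1/2)θ}`, `θ = arg(1-z²) ∈ [0,2π)`):
for each `0 ≤ k ≤ m` there is a zero `z_k*` with
`1-(z_k*)² = 2^{1/(2m+1)} e^{iθ_k}` where `(m+1/2)θ_k = π/2 + 2πk`,
and these enumerate all the zeros with `θ ∈ [0, 2π)`. -/
theorem enumeration_of_q_zeros (m : ℕ) :
    (∀ k : ℕ, k ≤ m → ∃ z : ℂ,
        1 - z^2 = (((2:ℝ) ^ ((1:ℝ) / (2 * (m:ℝ) + 1)) : ℝ) : ℂ) *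
          Complex.exp ((((π / 2 + 2 * π * k) / ((m:ℝ) + 1/2)) : ℝ) * Complex.I) ∧
        ((m:ℝ) + 1/2) * ((π / 2 + 2 * π * k) / ((m:ℝ) + 1/2)) = π / 2 + 2 * π * k ∧
        ((‖1 - z^2‖ ^ ((m:ℝ) + 1/2) : ℝ) : ℂ) *
            Complex.exp ((((m:ℝ) + 1/2) * ((π / 2 + 2 * π * k) / ((m:ℝ) + 1/2)) : ℝ)
              * Complex.I)
          = Complex.I * (Real.sqrt 2 : ℂ)) ∧
    (∀ z : ℂ, ∀ θ : ℝ, 0 ≤ θ → θ < 2 * π →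
      1 - z^2 = (‖1 - z^2‖ : ℂ) * Complex.exp (θ * Complex.I) →
      ((‖1 - z^2‖ ^ ((m:ℝ) + 1/2) : ℝ) : ℂ) *
          Complex.exp ((((m:ℝ) + 1/2) * θ : ℝ) * Complex.I)
        = Complex.I * (Real.sqrt 2 : ℂ) →
      ‖1 - z^2‖ = (2:ℝ) ^ ((1:ℝ) / (2 * (m:ℝ) + 1)) ∧
        ∃ k : ℕ, k ≤ m ∧ θ = (π / 2 + 2 * π * k) / ((m:ℝ) + 1/2)) := by
  have hπ := Real.pi_pos
  set M : ℝ := (m:ℝ) + 1/2 with hMdef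
  have hM : (0:ℝ) < M := by positivity
  have hM' : (2:ℝ) * (m:ℝ) + 1 ≠ 0 := by positivity
  set r : ℝ := (2:ℝ) ^ ((1:ℝ) / (2 * (m:ℝ) + 1)) with hrdef
  have hr : (0:ℝ) < r := Real.rpow_pos_of_pos (by norm_num) _
  have hrM : r ^ M = Real.sqrt 2 := by
    rw [hrdef, ← Real.rpow_mul (by norm_num : (0:ℝ) ≤ 2)]
    rw [Real.sqrt_eq_rpow]
    congr 1
    field_simp [hMdef]
    ring
  constructor
  · intro k hk
    set θk : ℝ := (π / 2 + 2 * π * k) / M with hθkdef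
    have hMθk : M * θk = π / 2 + 2 * π * k := by
      rw [hθkdef]; field_simp
    obtain ⟨z, hz⟩ := IsAlgClosed.exists_pow_nat_eq
      (1 - (r:ℂ) * Complex.exp ((θk:ℝ) * Complex.I)) (n:=2) (by norm_num)
    have h1 : 1 - z^2 = (r:ℂ) * Complex.exp ((θk:ℝ) * Complex.I) := by
      rw [hz]; ring
    refine ⟨z, h1, hMθk, ?_⟩
    have habs : ‖1 - z^2‖ = r := by
      rw [h1, norm_mul, Complex.norm_exp_ofReal_mul_I, Complex.norm_of_nonneg hr.le, mul_one]
    rw [habs, hrM, hMθk]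
    have := exp_shift (k:ℤ)
    push_cast at this ⊢
    rw [this]; ring
  · intro z θ hθ0 hθ2 _ heq
    set A : ℝ := ‖1 - z^2‖ with hAdef
    have hA0 : (0:ℝ) ≤ A := norm_nonneg _
    have h1 : A ^ M = Real.sqrt 2 := by
      have h := congrArg norm heq
      simpa [norm_mul, Complex.norm_exp, Complex.norm_real,
        _root_.abs_of_nonneg (Real.rpow_nonneg hA0 M),
        _root_.abs_of_nonneg (Real.sqrt_nonneg 2)] using h
    have hAval : A = r := by
      have h2 : (A ^ M) ^ (M⁻¹) = (Real.sqrt 2) ^ (M⁻¹) := by rw [h1]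
      rwa [← Real.rpow_mul hA0, mul_inv_cancel₀ hM.ne', Real.rpow_one,
        Real.sqrt_eq_rpow, ← Real.rpow_mul (by norm_num : (0:ℝ) ≤ 2),
        show (1/2 : ℝ) * M⁻¹ = (1:ℝ) / (2 * (m:ℝ) + 1) by
          rw [hMdef]; rw [inv_eq_one_div]; field_simp] at h2
    refine ⟨hAval, ?_⟩
    have hs : ((Real.sqrt 2 : ℝ) : ℂ) ≠ 0 := by
      simp [Real.sqrt_eq_zero']
    have h3 : Complex.exp ((M * θ : ℝ) * Complex.I) = Complex.I := by
      rw [h1] at heq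
      have := heq.trans (by ring : Complex.I * (Real.sqrt 2 : ℂ)
        = (Real.sqrt 2 : ℂ) * Complex.I)
      exact mul_left_cancel₀ hs this
    obtain ⟨n, hn⟩ := Complex.exp_eq_exp_iff_exists_int.mp
      (h3.trans exp_pi_div_two_mul_I'.symm)
    have h5 : M * θ = π/2 + n * (2*π) := by
      have := congrArg Complex.im hn
      simpa using this
    have hub : M * θ < (2*(m:ℝ)+1) * π := by
      have := mul_lt_mul_of_pos_left hθ2 hM
      rw [hMdef] at this ⊢
      nlinarith
    have hlb : (0:ℝ) ≤ M * θ := mul_nonneg hM.le hθ0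
    have hn0 : 0 ≤ n := by
      by_contra h
      push_neg at h
      have h' : n ≤ -1 := by omega
      have : (n:ℝ) ≤ -1 := by exact_mod_cast h'
      nlinarith
    have hnm : n ≤ (m:ℤ) := by
      by_contra h
      push_neg at h
      have h' : (m:ℤ) + 1 ≤ n := by omega
      have : (m:ℝ) + 1 ≤ (n:ℝ) := by exact_mod_cast h'
      nlinarith
    refine ⟨n.toNat, ?_, ?_⟩
    · omega
    · have hcast : ((n.toNat : ℕ) : ℝ) = (n:ℝ) := by
        exact_mod_cast Int.toNat_of_nonneg hn0
      rw [hcast, eq_div_iff hM.ne']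
      linear_combination h5
end
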